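/- Let p ∈ (1, ∞) and let f : ℝ → ℝ be a function. Then the following are equivalent: (1) there exists g ∈ L^p(ℝ, Lebesgue measure) such that f(b) − f(a) = ∫_a^b g(u) du for all real a ≤ b; (2) there exists a constant C > 0 such that for every N ∈ ℕ and every finite increasing sequence of real points x₁ < x₂ < ⋯ < x_{N+1}, one has Σ_{n=1}^N |f(x_{n+1}) − f(x_n)|^p / (x_{n+1} − x_n)^{p−1} ≤ C. -/

import Mathlib

open MeasureTheory

open Filter Set
open scoped ENNReal NNReal

section riesz_aux
variable {p C : ℝ} {f : ℝ → ℝ}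

theorem sum_range_le (hp : 1 < p) (hC : 0 < C)
    (hsum : ∀ (N : ℕ) (x : Fin (N + 1) → ℝ), StrictMono x →
      ∑ n : Fin N, |f (x n.succ) - f (x n.castSucc)| ^ p
          / (x n.succ - x n.castSucc) ^ (p - 1) ≤ C)
    (n : ℕ) (u : ℕ → ℝ) (hu : ∀ i, i < n → u i < u (i + 1)) :
    ∑ i ∈ Finset.range n, |f (u (i + 1)) - f (u i)| ^ p / (u (i + 1) - u i) ^ (p - 1) ≤ C := by
  have key : ∀ j, j ≤ n → ∀ i, i < j → u i < u j := by
    intro j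
    induction j with
    | zero => omega
    | succ k ih =>
      intro hk i hi
      rcases Nat.lt_succ_iff_lt_or_eq.mp hi with h | h
      · exact (ih (by omega) i h).trans (hu k (by omega))
      · subst h; exact hu i (by omega)
  have hx : StrictMono (fun i : Fin (n + 1) => u i.val) := by
    intro a b hab
    exact key b.val (Nat.lt_succ_iff.mp b.isLt) a.val hab
  have := hsum n (fun i : Fin (n + 1) => u i.val) hx
  rw [← Fin.sum_univ_eq_sum_range
    (fun i => |f (u (i + 1)) - f (u i)| ^ p / (u (i + 1) - u i) ^ (p - 1)) n]
  simpa [Fin.val_succ, Fin.coe_castSucc] using this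


theorem holder_strict (hp : 1 < p)
    (hsum1 : ∀ (n : ℕ) (u : ℕ → ℝ), (∀ i, i < n → u i < u (i + 1)) →
      ∑ i ∈ Finset.range n, |f (u (i + 1)) - f (u i)| ^ p / (u (i + 1) - u i) ^ (p - 1) ≤ C)
    (n : ℕ) (u : ℕ → ℝ) (hu : ∀ i, i < n → u i < u (i + 1)) :
    ∑ i ∈ Finset.range n, |f (u (i + 1)) - f (u i)|
      ≤ C ^ (1 / p) * (u n - u 0) ^ ((p - 1) / p) := by
  have hp0 : (0:ℝ) < p := lt_trans zero_lt_one hp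
  have hp1 : (0:ℝ) < p - 1 := by linarith
  have hC : (0:ℝ) ≤ C := le_trans (by positivity) (hsum1 0 u (by omega))
  have hpq : p.HolderConjugate (p / (p - 1)) := by
    rw [Real.holderConjugate_iff]
    refine ⟨hp, ?_⟩
    rw [inv_div]; field_simp; ring
  set F : ℕ → ℝ := fun i => |f (u (i + 1)) - f (u i)| / (u (i + 1) - u i) ^ ((p - 1) / p) with hF
  set G : ℕ → ℝ := fun i => (u (i + 1) - u i) ^ ((p - 1) / p) with hG
  have hdpos : ∀ i ∈ Finset.range n, (0:ℝ) < u (i + 1) - u i := by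
    intro i hi
    have := hu i (Finset.mem_range.mp hi)
    linarith
  have hFG : ∀ i ∈ Finset.range n, F i * G i = |f (u (i + 1)) - f (u i)| := by
    intro i hi
    have h1 : (u (i + 1) - u i) ^ ((p - 1) / p) ≠ 0 :=
      (Real.rpow_pos_of_pos (hdpos i hi) _).ne'
    simp only [hF, hG]
    field_simp
  have hFp : ∀ i ∈ Finset.range n,
      F i ^ p = |f (u (i + 1)) - f (u i)| ^ p / (u (i + 1) - u i) ^ (p - 1) := by
    intro i hi
    simp only [hF]
    rw [Real.div_rpow (abs_nonneg _) (Real.rpow_nonneg (hdpos i hi).le _),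
      ← Real.rpow_mul (hdpos i hi).le, div_mul_cancel₀ _ hp0.ne']
  have hGq : ∀ i ∈ Finset.range n, G i ^ (p / (p - 1)) = u (i + 1) - u i := by
    intro i hi
    simp only [hG]
    rw [← Real.rpow_mul (hdpos i hi).le]
    rw [show (p - 1) / p * (p / (p - 1)) = 1 by field_simp]
    exact Real.rpow_one _
  have holder := Real.inner_le_Lp_mul_Lq_of_nonneg (Finset.range n) hpq
    (f := F) (g := G)
    (fun i hi => div_nonneg (abs_nonneg _) (Real.rpow_nonneg (hdpos i hi).le _))
    (fun i hi => Real.rpow_nonneg (hdpos i hi).le _)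
  calc ∑ i ∈ Finset.range n, |f (u (i + 1)) - f (u i)|
      = ∑ i ∈ Finset.range n, F i * G i := (Finset.sum_congr rfl hFG).symm
    _ ≤ (∑ i ∈ Finset.range n, F i ^ p) ^ (1 / p)
        * (∑ i ∈ Finset.range n, G i ^ (p / (p - 1))) ^ (1 / (p / (p - 1))) := holder
    _ ≤ C ^ (1 / p) * (u n - u 0) ^ ((p - 1) / p) := by
        have h1 : ∑ i ∈ Finset.range n, F i ^ p ≤ C := by
          rw [Finset.sum_congr rfl hFp]
          exact hsum1 n u hu
        have h2 : ∑ i ∈ Finset.range n, G i ^ (p / (p - 1)) = u n - u 0 := by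
          rw [Finset.sum_congr rfl hGq]
          exact Finset.sum_range_sub u n
        rw [h2, one_div (p / (p - 1)), inv_div]
        refine mul_le_mul_of_nonneg_right ?_ (Real.rpow_nonneg ?_ _)
        · refine Real.rpow_le_rpow (Finset.sum_nonneg fun i hi => ?_) h1 (by positivity)
          rw [hFp i hi]
          exact div_nonneg (Real.rpow_nonneg (abs_nonneg _) _)
            (Real.rpow_nonneg (hdpos i hi).le _)
        · rw [← Finset.sum_range_sub u n]
          exact Finset.sum_nonneg fun i hi => (hdpos i hi).le


theorem f_holder (hp : 1 < p)
    (hold : ∀ (n : ℕ) (u : ℕ → ℝ), (∀ i, i < n → u i < u (i + 1)) →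
      ∑ i ∈ Finset.range n, |f (u (i + 1)) - f (u i)|
        ≤ C ^ (1 / p) * (u n - u 0) ^ ((p - 1) / p))
    (a b : ℝ) (hab : a < b) :
    |f b - f a| ≤ C ^ (1 / p) * (b - a) ^ ((p - 1) / p) := by
  have := hold 1 (fun i => if i = 0 then a else b) (by intro i hi; interval_cases i; simpa)
  simpa using this

theorem f_cont (hp : 1 < p)
    (hold : ∀ a b : ℝ, a < b → |f b - f a| ≤ C ^ (1 / p) * (b - a) ^ ((p - 1) / p)) :
    Continuous f := by
  have hp0 : (0:ℝ) < p := lt_trans zero_lt_one hp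
  have he : (0:ℝ) < (p - 1) / p := div_pos (by linarith) hp0
  rw [continuous_iff_continuousAt]
  intro x
  have hbound : ∀ y : ℝ, |f y - f x| ≤ C ^ (1 / p) * |y - x| ^ ((p - 1) / p) := by
    intro y
    rcases lt_trichotomy x y with h | h | h
    · rw [abs_of_pos (by linarith : (0:ℝ) < y - x)]
      exact hold x y h
    · subst h; simp [Real.zero_rpow he.ne']
    · rw [abs_of_neg (by linarith : y - x < 0), abs_sub_comm]
      have := hold y x h
      convert this using 3
      ring
  have htend : Tendsto (fun y => C ^ (1 / p) * |y - x| ^ ((p - 1) / p)) (nhds x) (nhds 0) := by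
    have h1 : Tendsto (fun y : ℝ => |y - x|) (nhds x) (nhds 0) := by
      have : Continuous fun y : ℝ => |y - x| := by continuity
      simpa using this.tendsto x
    have h2 : ContinuousAt (fun t : ℝ => t ^ ((p - 1) / p)) 0 :=
      Real.continuousAt_rpow_const 0 _ (Or.inr he.le)
    have h3 := (h2.tendsto.comp h1)
    rw [Real.zero_rpow he.ne'] at h3
    simpa using h3.const_mul (C ^ (1 / p))
  have : Tendsto (fun y => |f y - f x|) (nhds x) (nhds 0) :=
    squeeze_zero (fun y => abs_nonneg _) hbound htend
  rw [ContinuousAt, tendsto_iff_dist_tendsto_zero]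
  simpa [Real.dist_eq] using this

theorem holder_mono (hp : 1 < p) (hC : 0 ≤ C) (hf : Continuous f)
    (hold : ∀ (n : ℕ) (u : ℕ → ℝ), (∀ i, i < n → u i < u (i + 1)) →
      ∑ i ∈ Finset.range n, |f (u (i + 1)) - f (u i)|
        ≤ C ^ (1 / p) * (u n - u 0) ^ ((p - 1) / p))
    (n : ℕ) (u : ℕ → ℝ) (hu : ∀ i, i < n → u i ≤ u (i + 1)) :
    ∑ i ∈ Finset.range n, |f (u (i + 1)) - f (u i)|
      ≤ C ^ (1 / p) * (u n - u 0) ^ ((p - 1) / p) := by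
  have hp0 : (0:ℝ) < p := lt_trans zero_lt_one hp
  have he : (0:ℝ) < (p - 1) / p := div_pos (by linarith) hp0
  set S : ℝ → ℝ := fun ε => ∑ i ∈ Finset.range n,
    |f (u (i + 1) + (i + 1) * ε) - f (u i + i * ε)| with hS
  set R : ℝ → ℝ := fun ε => C ^ (1 / p) * (u n - u 0 + n * ε) ^ ((p - 1) / p) with hR
  have hSR : ∀ ε : ℝ, 0 < ε → S ε ≤ R ε := by
    intro ε hε
    have := hold n (fun i => u i + i * ε) (by
      intro i hi
      have h1 := hu i hi
      have : (i:ℝ) * ε < (i + 1 : ℕ) * ε := by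
        push_cast
        nlinarith
      push_cast
      push_cast at this
      nlinarith)
    simp only [hS, hR]
    have heq : u n - u 0 + (n:ℝ) * ε = u n + (n:ℝ) * ε - u 0 := by ring
    rw [heq]
    simpa using this
  -- take ε → 0 along 1/(k+1)
  have hseq : Tendsto (fun k : ℕ => ((k:ℝ) + 1)⁻¹) atTop (nhds 0) :=
    tendsto_one_div_add_atTop_nhds_zero_nat.congr (by intro k; rw [one_div])
  have hScont : Continuous S := by
    apply continuous_finset_sum
    intro i _
    apply Continuous.abs
    exact ((hf.comp (by continuity)).sub (hf.comp (by continuity)))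
  have hRcont : ContinuousAt R 0 := by
    apply ContinuousAt.mul continuousAt_const
    have h2 : ContinuousAt (fun x : ℝ => u n - u 0 + (n:ℝ) * x) 0 := by fun_prop
    exact h2.rpow_const (Or.inr he.le)
  have h1 : Tendsto (fun k : ℕ => S (((k:ℝ) + 1)⁻¹)) atTop (nhds (S 0)) :=
    (hScont.continuousAt.tendsto.comp hseq)
  have h2 : Tendsto (fun k : ℕ => R (((k:ℝ) + 1)⁻¹)) atTop (nhds (R 0)) :=
    (hRcont.tendsto.comp hseq)
  have h3 : S 0 ≤ R 0 :=
    le_of_tendsto_of_tendsto' h1 h2 (fun k => hSR _ (by positivity))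
  simpa [hS, hR] using h3


theorem f_bv (hp : 1 < p) (hC : 0 ≤ C)
    (hold : ∀ (n : ℕ) (u : ℕ → ℝ), (∀ i, i < n → u i ≤ u (i + 1)) →
      ∑ i ∈ Finset.range n, |f (u (i + 1)) - f (u i)|
        ≤ C ^ (1 / p) * (u n - u 0) ^ ((p - 1) / p)) :
    LocallyBoundedVariationOn f Set.univ := by
  intro a b _ _
  rw [Set.univ_inter]
  unfold BoundedVariationOn
  have hbound : eVariationOn f (Set.Icc a b)
      ≤ ENNReal.ofReal (C ^ (1 / p) * |b - a| ^ ((p - 1) / p)) := by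
    rw [eVariationOn]
    refine iSup_le ?_
    rintro ⟨n, u, hu, hus⟩
    have hmono : ∀ i, i < n → u i ≤ u (i + 1) := fun i _ => hu (Nat.le_succ i)
    have h1 : ∑ i ∈ Finset.range n, edist (f (u (i + 1))) (f (u i))
        = ENNReal.ofReal (∑ i ∈ Finset.range n, |f (u (i + 1)) - f (u i)|) := by
      rw [ENNReal.ofReal_sum_of_nonneg (fun i _ => abs_nonneg _)]
      refine Finset.sum_congr rfl fun i _ => ?_
      rw [edist_dist, Real.dist_eq]
    rw [h1]
    refine ENNReal.ofReal_le_ofReal ?_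
    refine le_trans (hold n u hmono) ?_
    refine mul_le_mul_of_nonneg_left ?_ (Real.rpow_nonneg ?_ _)
    · refine Real.rpow_le_rpow ?_ ?_ ?_
      · rw [← Finset.sum_range_sub u n]
        exact Finset.sum_nonneg fun i hi =>
          sub_nonneg.mpr (hmono i (Finset.mem_range.mp hi))
      · have h0 := (hus 0).1
        have hn := (hus n).2
        have hb : a ≤ b := le_trans (hus 0).1 (hus 0).2
        rw [abs_of_nonneg (by linarith : (0:ℝ) ≤ b - a)]
        linarith
      · exact div_nonneg (by linarith) (by linarith)
    · exact hC
  exact ne_top_of_le_ne_top ENNReal.ofReal_ne_top hbound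

theorem avg_bound (hp : 1 < p) (hC : 0 < C) (hf : Continuous f)
    (hsum1 : ∀ (n : ℕ) (u : ℕ → ℝ), (∀ i, i < n → u i < u (i + 1)) →
      ∑ i ∈ Finset.range n, |f (u (i + 1)) - f (u i)| ^ p / (u (i + 1) - u i) ^ (p - 1) ≤ C)
    {h : ℝ} (hh : 0 < h) (a : ℝ) (K : ℕ) :
    ∫ x in a..(a + K * h), |f (x + h) - f x| ^ p ≤ C * h ^ p := by
  have hp0 : (0:ℝ) < p := lt_trans zero_lt_one hp
  set G : ℝ → ℝ := fun y => |f (y + h) - f y| ^ p with hG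
  have hGcont : Continuous G := by
    apply Continuous.rpow_const
    · exact ((hf.comp (by continuity)).sub hf).abs
    · intro x; exact Or.inr hp0.le
  have hGnn : ∀ y, 0 ≤ G y := fun y => Real.rpow_nonneg (abs_nonneg _) _
  set w : ℕ → ℝ := fun k => a + k * h with hw
  have hint : ∀ (c d : ℝ), IntervalIntegrable G volume c d := fun c d =>
    hGcont.intervalIntegrable c d
  have hadj := intervalIntegral.sum_integral_adjacent_intervals
    (a := w) (n := K) (f := G) (μ := volume) (fun k _ => hint _ _)
  have hw0 : w 0 = a := by simp [hw]
  have hwK : w K = a + K * h := by simp [hw]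
  rw [hw0, hwK] at hadj
  have hshift : ∀ k : ℕ, ∫ x in w k..w (k + 1), G x = ∫ t in a..(a + h), G (t + k * h) := by
    intro k
    rw [intervalIntegral.integral_comp_add_right G ((k:ℝ) * h)]
    have e1 : a + (k:ℝ) * h = w k := rfl
    have e2 : a + h + (k:ℝ) * h = w (k + 1) := by simp [hw]; push_cast; ring
    rw [e1, e2]
  have hsum_int : ∑ k ∈ Finset.range K, ∫ t in a..(a + h), G (t + k * h)
      = ∫ t in a..(a + h), ∑ k ∈ Finset.range K, G (t + k * h) := by
    rw [intervalIntegral.integral_finset_sum]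
    intro k _
    exact (hGcont.comp (by continuity)).intervalIntegrable _ _
  have hptbound : ∀ t : ℝ, ∑ k ∈ Finset.range K, G (t + k * h) ≤ C * h ^ (p - 1) := by
    intro t
    have := hsum1 K (fun k => t + k * h) (by
      intro i hi; push_cast; nlinarith)
    have heq : ∀ k ∈ Finset.range K, G (t + k * h)
        = (|f (t + (k + 1 : ℕ) * h) - f (t + k * h)| ^ p
            / (t + ((k + 1 : ℕ):ℝ) * h - (t + k * h)) ^ (p - 1)) * h ^ (p - 1) := by
      intro k _
      have hd : t + ((k + 1 : ℕ):ℝ) * h - (t + (k:ℝ) * h) = h := by push_cast; ring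
      rw [hd, div_mul_cancel₀]
      · simp only [hG]
        congr 2
        push_cast; ring
      · exact (Real.rpow_pos_of_pos hh _).ne'
    rw [Finset.sum_congr rfl heq, ← Finset.sum_mul]
    refine mul_le_mul_of_nonneg_right ?_ (Real.rpow_nonneg hh.le _)
    simpa using this
  have hcont2 : ∀ k : ℕ, Continuous fun t : ℝ => G (t + k * h) :=
    fun k => hGcont.comp (continuous_id.add continuous_const)
  have step2 : ∫ x in a..(a + K * h), G x
      = ∫ t in a..(a + h), ∑ k ∈ Finset.range K, G (t + k * h) := by
    rw [← hadj, Finset.sum_congr rfl (fun k _ => hshift k)]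
    exact hsum_int
  have step3 : ∫ t in a..(a + h), ∑ k ∈ Finset.range K, G (t + k * h)
      ≤ ∫ t in a..(a + h), C * h ^ (p - 1) := by
    refine intervalIntegral.integral_mono_on (by linarith) ?_ ?_ ?_
    · exact (continuous_finset_sum _ fun k _ => hcont2 k).intervalIntegrable _ _
    · exact intervalIntegrable_const
    · intro x _; exact hptbound x
  have step4 : ∫ t in a..(a + h), C * h ^ (p - 1) = C * h ^ (p - 1) * h := by
    rw [intervalIntegral.integral_const]
    simp [smul_eq_mul]; ring
  have step5 : C * h ^ (p - 1) * h = C * h ^ p := by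
    rw [mul_assoc, ← Real.rpow_add_one hh.ne' (p - 1)]
    norm_num
  rw [step2]
  rw [step4, step5] at step3
  exact step3


theorem quot_lintegral (hp : 1 < p) (hC : 0 < C) (hf : Continuous f)
    (havg : ∀ {h : ℝ}, 0 < h → ∀ (a : ℝ) (K : ℕ),
      ∫ x in a..(a + K * h), |f (x + h) - f x| ^ p ≤ C * h ^ p)
    {h : ℝ} (hh : 0 < h) (a b : ℝ) :
    ∫⁻ x in Set.Ioc a b, ENNReal.ofReal (|(f (x + h) - f x) / h| ^ p)
      ≤ ENNReal.ofReal C := by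
  have hp0 : (0:ℝ) < p := lt_trans zero_lt_one hp
  rcases le_or_gt b a with hba | hab
  · rw [Set.Ioc_eq_empty (by exact not_lt.mpr hba), Measure.restrict_empty, lintegral_zero_measure]
    exact zero_le
  set G : ℝ → ℝ := fun y => |f (y + h) - f y| ^ p with hG
  have hGcont : Continuous G := by
    apply Continuous.rpow_const
    · exact ((hf.comp (continuous_id.add continuous_const)).sub hf).abs
    · intro x; exact Or.inr hp0.le
  have hGnn : ∀ y, 0 ≤ G y := fun y => Real.rpow_nonneg (abs_nonneg _) _
  obtain ⟨K, hK⟩ : ∃ K : ℕ, b ≤ a + K * h := by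
    refine ⟨⌈(b - a) / h⌉₊, ?_⟩
    have h1 : (b - a) / h ≤ (⌈(b - a) / h⌉₊ : ℝ) := Nat.le_ceil _
    have h2 : b - a ≤ (⌈(b - a) / h⌉₊ : ℝ) * h := by
      rw [← div_le_iff₀ hh] at *
      exact h1
    linarith
  have hIb : ∫ x in a..b, G x ≤ C * h ^ p := by
    have hadd : (∫ x in a..b, G x) + ∫ x in b..(a + K * h), G x
        = ∫ x in a..(a + K * h), G x :=
      intervalIntegral.integral_add_adjacent_intervals (μ := volume)
        (hGcont.intervalIntegrable a b) (hGcont.intervalIntegrable b (a + K * h))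
    have hnn : 0 ≤ ∫ x in b..(a + K * h), G x :=
      intervalIntegral.integral_nonneg hK (fun x _ => hGnn x)
    have h5 := havg hh a K
    change ∫ x in a..(a + K * h), G x ≤ C * h ^ p at h5
    linarith
  have habs : ∀ x : ℝ, |(f (x + h) - f x) / h| ^ p = G x / h ^ p := by
    intro x
    rw [abs_div, abs_of_pos hh, Real.div_rpow (abs_nonneg _) hh.le]
  simp_rw [habs]
  have hInt : IntegrableOn (fun x => G x / h ^ p) (Set.Ioc a b) volume :=
    (hGcont.div_const _).integrableOn_Ioc
  rw [← ofReal_integral_eq_lintegral_ofReal hInt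
    (Filter.Eventually.of_forall fun x => div_nonneg (hGnn x) (Real.rpow_nonneg hh.le _))]
  refine ENNReal.ofReal_le_ofReal ?_
  rw [← intervalIntegral.integral_of_le hab.le, intervalIntegral.integral_div]
  rw [div_le_iff₀ (Real.rpow_pos_of_pos hh _)]
  exact hIb

theorem deriv_lintegral (hp : 1 < p) (hC : 0 < C) (hf : Continuous f)
    (hbv : LocallyBoundedVariationOn f Set.univ)
    (hquot : ∀ {h : ℝ}, 0 < h → ∀ a b : ℝ,
      ∫⁻ x in Set.Ioc a b, ENNReal.ofReal (|(f (x + h) - f x) / h| ^ p)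
        ≤ ENNReal.ofReal C)
    (a b : ℝ) :
    ∫⁻ x in Set.Ioc a b, ENNReal.ofReal (|deriv f x| ^ p) ≤ ENNReal.ofReal C := by
  have hp0 : (0:ℝ) < p := lt_trans zero_lt_one hp
  set D : ℕ → ℝ → ℝ := fun n x => (f (x + ((n:ℝ) + 1)⁻¹) - f x) / ((n:ℝ) + 1)⁻¹ with hD
  have hDcont : ∀ n, Continuous (D n) :=
    fun n => ((hf.comp (continuous_id.add continuous_const)).sub hf).div_const _
  have hcont : Continuous (fun y : ℝ => ENNReal.ofReal (|y| ^ p)) :=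
    ENNReal.continuous_ofReal.comp (continuous_abs.rpow_const fun _ => Or.inr hp0.le)
  have hseq : Tendsto (fun n : ℕ => ((n:ℝ) + 1)⁻¹) atTop (nhds 0) :=
    tendsto_one_div_add_atTop_nhds_zero_nat.congr (fun k => by rw [one_div])
  have htend : ∀ᵐ x : ℝ, Tendsto (fun n => D n x) atTop (nhds (deriv f x)) := by
    filter_upwards [hbv.ae_differentiableAt] with x hx
    have hder := hx.hasDerivAt
    rw [hasDerivAt_iff_tendsto_slope] at hder
    have h1 : Tendsto (fun n : ℕ => x + ((n:ℝ) + 1)⁻¹) atTop (nhdsWithin x {x}ᶜ) := by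
      apply tendsto_nhdsWithin_of_tendsto_nhds_of_eventually_within
      · have := hseq.const_add x
        simpa using this
      · refine Filter.Eventually.of_forall fun n => ?_
        simp only [Set.mem_compl_iff, Set.mem_singleton_iff]
        have : (0:ℝ) < ((n:ℝ) + 1)⁻¹ := by positivity
        intro hcon
        nlinarith [hcon]
    have h2 := hder.comp h1
    refine h2.congr fun n => ?_
    simp only [Function.comp_apply]
    rw [slope_def_field]
    simp only [hD]
    congr 1
    ring
  have hmeas : ∀ n, Measurable fun x => ENNReal.ofReal (|D n x| ^ p) :=
    fun n => (hcont.comp (hDcont n)).measurable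
  have hae : ∀ᵐ x ∂(volume.restrict (Set.Ioc a b)),
      ENNReal.ofReal (|deriv f x| ^ p)
        = liminf (fun n => ENNReal.ofReal (|D n x| ^ p)) atTop := by
    refine ae_restrict_of_ae ?_
    filter_upwards [htend] with x hx
    exact ((hcont.continuousAt.tendsto.comp hx).liminf_eq).symm
  rw [lintegral_congr_ae hae]
  refine le_trans (lintegral_liminf_le hmeas) ?_
  have hle : ∀ n : ℕ, ∫⁻ x in Set.Ioc a b, ENNReal.ofReal (|D n x| ^ p)
      ≤ ENNReal.ofReal C := fun n => hquot (by positivity) a b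
  calc liminf (fun n => ∫⁻ x in Set.Ioc a b, ENNReal.ofReal (|D n x| ^ p)) atTop
      ≤ liminf (fun _ : ℕ => ENNReal.ofReal C) atTop :=
        Filter.liminf_le_liminf (Filter.Eventually.of_forall hle)
    _ = ENNReal.ofReal C := Filter.liminf_const _


theorem glob_lintegral (hp : 1 < p) {g : ℝ → ℝ} (hg : Measurable g)
    (hloc : ∀ a b : ℝ, ∫⁻ x in Set.Ioc a b, ENNReal.ofReal (|g x| ^ p) ≤ ENNReal.ofReal C) :
    ∫⁻ x, ENNReal.ofReal (|g x| ^ p) ≤ ENNReal.ofReal C := by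
  have hp0 : (0:ℝ) < p := lt_trans zero_lt_one hp
  set F : ℝ → ℝ≥0∞ := fun x => ENNReal.ofReal (|g x| ^ p) with hF
  have hFmeas : Measurable F := by
    apply Measurable.ennreal_ofReal
    fun_prop
  set ν : Measure ℝ := volume.withDensity F with hν
  have hU : (⋃ n : ℕ, Set.Ioc (-(n:ℝ)) n) = Set.univ := by
    ext x
    simp only [Set.mem_iUnion, Set.mem_univ, iff_true, Set.mem_Ioc]
    obtain ⟨n, hn⟩ := exists_nat_gt |x|
    have := abs_lt.mp hn
    exact ⟨n, by linarith [this.1], by linarith [this.2]⟩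
  have hmono : Monotone (fun n : ℕ => Set.Ioc (-(n:ℝ)) n) := by
    intro m n hmn
    exact Set.Ioc_subset_Ioc (neg_le_neg (by exact_mod_cast hmn)) (by exact_mod_cast hmn)
  have h1 : ∫⁻ x, F x = ν Set.univ := by
    rw [hν, withDensity_apply _ MeasurableSet.univ, Measure.restrict_univ]
  rw [h1, ← hU, hmono.measure_iUnion]
  refine iSup_le fun n => ?_
  rw [hν, withDensity_apply _ measurableSet_Ioc]
  exact hloc _ _

theorem g_memLp (hp : 1 < p) {g : ℝ → ℝ} (hg : Measurable g)
    (hglob : ∫⁻ x, ENNReal.ofReal (|g x| ^ p) ≤ ENNReal.ofReal C) :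
    MemLp g (ENNReal.ofReal p) (volume : Measure ℝ) := by
  have hp0 : (0:ℝ) < p := lt_trans zero_lt_one hp
  refine ⟨hg.aestronglyMeasurable, ?_⟩
  rw [eLpNorm_eq_lintegral_rpow_enorm_toReal (by simp [ENNReal.ofReal_eq_zero]; linarith)
    ENNReal.ofReal_ne_top]
  rw [ENNReal.toReal_ofReal hp0.le]
  have heq : ∀ x : ℝ, (‖g x‖₊ : ℝ≥0∞) ^ p = ENNReal.ofReal (|g x| ^ p) := by
    intro x
    rw [← enorm_eq_nnnorm, Real.enorm_eq_ofReal_abs, ← ENNReal.ofReal_rpow_of_nonneg (abs_nonneg _) hp0.le]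
  simp_rw [enorm_eq_nnnorm, heq]
  refine ENNReal.rpow_lt_top_of_nonneg (by positivity) ?_
  exact ne_top_of_le_ne_top ENNReal.ofReal_ne_top hglob


theorem slope_tendsto_aux {F : ℝ → ℝ} {x L : ℝ} (hd : HasDerivAt F L x) :
    Tendsto (fun n : ℕ => (F (x + ((n:ℝ) + 1)⁻¹) - F x) / ((n:ℝ) + 1)⁻¹)
      atTop (nhds L) := by
  rw [hasDerivAt_iff_tendsto_slope] at hd
  have hseq : Tendsto (fun n : ℕ => ((n:ℝ) + 1)⁻¹) atTop (nhds 0) :=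
    tendsto_one_div_add_atTop_nhds_zero_nat.congr (fun k => by rw [one_div])
  have h1 : Tendsto (fun n : ℕ => x + ((n:ℝ) + 1)⁻¹) atTop (nhdsWithin x {x}ᶜ) := by
    apply tendsto_nhdsWithin_of_tendsto_nhds_of_eventually_within
    · have := hseq.const_add x
      simpa using this
    · refine Filter.Eventually.of_forall fun n => ?_
      simp only [Set.mem_compl_iff, Set.mem_singleton_iff]
      have h2 : (0:ℝ) < ((n:ℝ) + 1)⁻¹ := by positivity
      intro hcon
      nlinarith [hcon]
  have h2 := hd.comp h1
  refine h2.congr fun n => ?_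
  simp only [Function.comp_apply]
  rw [slope_def_field]
  congr 1
  ring

theorem D_tendsto (hbv : LocallyBoundedVariationOn f Set.univ) :
    ∀ᵐ x : ℝ, Tendsto
      (fun n : ℕ => (f (x + ((n:ℝ) + 1)⁻¹) - f x) / ((n:ℝ) + 1)⁻¹)
      atTop (nhds (deriv f x)) := by
  filter_upwards [hbv.ae_differentiableAt] with x hx
  exact slope_tendsto_aux hx.hasDerivAt

theorem unif_int (hp : 1 < p) (hC : 0 < C) (hf : Continuous f)
    (hquot : ∀ {h : ℝ}, 0 < h → ∀ a b : ℝ,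
      ∫⁻ x in Set.Ioc a b, ENNReal.ofReal (|(f (x + h) - f x) / h| ^ p)
        ≤ ENNReal.ofReal C)
    (a b : ℝ) :
    UnifIntegrable (fun (n : ℕ) (x : ℝ) => (f (x + ((n:ℝ) + 1)⁻¹) - f x) / ((n:ℝ) + 1)⁻¹)
      1 (volume.restrict (Set.Ioc a b)) := by
  have hp0 : (0:ℝ) < p := lt_trans zero_lt_one hp
  have hq0 : (0:ℝ) < p / (p - 1) := by
    apply div_pos hp0; linarith
  have hpq : p.HolderConjugate (p / (p - 1)) := by
    rw [Real.holderConjugate_iff]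
    refine ⟨hp, ?_⟩
    rw [inv_div]; field_simp; ring
  set D : ℕ → ℝ → ℝ := fun n x => (f (x + ((n:ℝ) + 1)⁻¹) - f x) / ((n:ℝ) + 1)⁻¹ with hD
  have hDcont : ∀ n, Continuous (D n) :=
    fun n => ((hf.comp (continuous_id.add continuous_const)).sub hf).div_const _
  intro ε hε
  set q := p / (p - 1) with hqdef
  set δ : ℝ := (ε / (C ^ (1 / p) + 1)) ^ q with hδ
  have hCp : (0:ℝ) < C ^ (1 / p) := Real.rpow_pos_of_pos hC _
  have hδpos : 0 < δ := by
    apply Real.rpow_pos_of_pos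
    positivity
  refine ⟨δ, hδpos, ?_⟩
  intro i s hs hμs
  rw [eLpNorm_one_eq_lintegral_enorm]
  have hpt : ∀ x : ℝ, (‖s.indicator (D i) x‖₊ : ℝ≥0∞)
      = (‖D i x‖₊ : ℝ≥0∞) * s.indicator (fun _ => (1:ℝ≥0∞)) x := by
    intro x
    by_cases hx : x ∈ s <;> simp [hx]
  simp_rw [enorm_eq_nnnorm, hpt]
  have holder := ENNReal.lintegral_mul_le_Lp_mul_Lq (volume.restrict (Set.Ioc a b)) hpq
    (f := fun x => (‖D i x‖₊ : ℝ≥0∞)) (g := s.indicator (fun _ => (1:ℝ≥0∞)))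
    ((hDcont i).measurable.nnnorm.coe_nnreal_ennreal.aemeasurable)
    ((measurable_one.indicator hs).aemeasurable)
  refine le_trans holder ?_
  have h1 : ∫⁻ x, ((‖D i x‖₊ : ℝ≥0∞)) ^ p ∂(volume.restrict (Set.Ioc a b))
      ≤ ENNReal.ofReal C := by
    have heq : ∀ x : ℝ, ((‖D i x‖₊ : ℝ≥0∞)) ^ p = ENNReal.ofReal (|D i x| ^ p) := by
      intro x
      rw [← enorm_eq_nnnorm, Real.enorm_eq_ofReal_abs, ← ENNReal.ofReal_rpow_of_nonneg (abs_nonneg _) hp0.le]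
    simp_rw [heq]
    exact hquot (by positivity) a b
  have h2 : ∫⁻ x, (s.indicator (fun _ => (1:ℝ≥0∞)) x) ^ q ∂(volume.restrict (Set.Ioc a b))
      ≤ ENNReal.ofReal δ := by
    have heq : ∀ x : ℝ, (s.indicator (fun _ => (1:ℝ≥0∞)) x) ^ q
        = s.indicator (fun _ => (1:ℝ≥0∞)) x := by
      intro x
      by_cases hx : x ∈ s <;>
        simp [hx, ENNReal.zero_rpow_of_pos hq0, ENNReal.one_rpow]
    simp_rw [heq]
    rw [lintegral_indicator hs]
    simpa using hμs
  calc (∫⁻ x, ((‖D i x‖₊ : ℝ≥0∞)) ^ p ∂(volume.restrict (Set.Ioc a b))) ^ (1/p)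
        * (∫⁻ x, (s.indicator (fun _ => (1:ℝ≥0∞)) x) ^ q ∂(volume.restrict (Set.Ioc a b))) ^ (1/q)
      ≤ (ENNReal.ofReal C) ^ (1/p) * (ENNReal.ofReal δ) ^ (1/q) := by
        gcongr
    _ ≤ ENNReal.ofReal ε := by
        rw [ENNReal.ofReal_rpow_of_pos hC, ENNReal.ofReal_rpow_of_pos hδpos,
          ← ENNReal.ofReal_mul (Real.rpow_nonneg hC.le _)]
        refine ENNReal.ofReal_le_ofReal ?_
        have hδq : δ ^ (1/q) = ε / (C ^ (1 / p) + 1) := by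
          rw [hδ, ← Real.rpow_mul (by positivity : (0:ℝ) ≤ ε / (C ^ (1 / p) + 1)),
            mul_one_div, div_self hq0.ne', Real.rpow_one]
        rw [hδq, mul_div_assoc', div_le_iff₀ (by positivity)]
        nlinarith


theorem ftc_aux (hp : 1 < p) (hf : Continuous f)
    (htend : ∀ᵐ x : ℝ, Tendsto
      (fun n : ℕ => (f (x + ((n:ℝ) + 1)⁻¹) - f x) / ((n:ℝ) + 1)⁻¹)
      atTop (nhds (deriv f x)))
    (hunif : ∀ a b : ℝ, UnifIntegrable
      (fun (n : ℕ) (x : ℝ) => (f (x + ((n:ℝ) + 1)⁻¹) - f x) / ((n:ℝ) + 1)⁻¹)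
      1 (volume.restrict (Set.Ioc a b)))
    (hmem : MemLp (deriv f) (ENNReal.ofReal p) (volume : Measure ℝ))
    {a b : ℝ} (hab : a ≤ b) :
    f b - f a = ∫ x in a..b, deriv f x := by
  have hp0 : (0:ℝ) < p := lt_trans zero_lt_one hp
  rcases eq_or_lt_of_le hab with rfl | hab
  · simp
  set D : ℕ → ℝ → ℝ := fun n x => (f (x + ((n:ℝ) + 1)⁻¹) - f x) / ((n:ℝ) + 1)⁻¹ with hD
  have hDcont : ∀ n, Continuous (D n) :=
    fun n => ((hf.comp (continuous_id.add continuous_const)).sub hf).div_const _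
  set μab := volume.restrict (Set.Ioc a b) with hμab
  haveI : IsFiniteMeasure μab :=
    ⟨by rw [Measure.restrict_apply_univ]; exact measure_Ioc_lt_top⟩
  set g := deriv f with hg
  have hgInt : Integrable g μab := by
    refine MemLp.integrable ?_ (hmem.restrict _)
    rw [ENNReal.one_le_ofReal]
    linarith
  have hgmem1 : MemLp g 1 μab := memLp_one_iff_integrable.mpr hgInt
  have hL1 : Tendsto (fun n => eLpNorm (D n - g) 1 μab) atTop (nhds 0) :=
    tendsto_Lp_finite_of_tendsto_ae le_rfl ENNReal.one_ne_top
      (fun n => (hDcont n).aestronglyMeasurable) hgmem1 (hunif a b)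
      (ae_restrict_of_ae htend)
  -- convergence of integrals
  have hDInt : ∀ n, Integrable (D n) μab := fun n => (hDcont n).integrableOn_Ioc
  have hdist : ∀ n, dist (∫ x, D n x ∂μab) (∫ x, g x ∂μab)
      ≤ (eLpNorm (D n - g) 1 μab).toReal := by
    intro n
    rw [dist_eq_norm, ← integral_sub (hDInt n) hgInt]
    refine le_trans (norm_integral_le_integral_norm _) ?_
    have hmeas2 : AEStronglyMeasurable (D n - g) μab :=
      ((hDcont n).aestronglyMeasurable.restrict).sub hgmem1.aestronglyMeasurable
    refine le_of_eq ?_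
    calc ∫ x, ‖D n x - g x‖ ∂μab
        = ∫ x, ‖(D n - g) x‖ ∂μab := rfl
      _ = (∫⁻ x, (‖(D n - g) x‖₊ : ℝ≥0∞) ∂μab).toReal :=
          integral_norm_eq_lintegral_enorm hmeas2
      _ = (eLpNorm (D n - g) 1 μab).toReal := by rw [eLpNorm_one_eq_lintegral_enorm]; rfl
  have htoReal : Tendsto (fun n => (eLpNorm (D n - g) 1 μab).toReal) atTop (nhds 0) := by
    have := (ENNReal.tendsto_toReal (by simp : (0:ℝ≥0∞) ≠ ⊤)).comp hL1
    exact this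
  have hInt_tend : Tendsto (fun n => ∫ x, D n x ∂μab) atTop (nhds (∫ x, g x ∂μab)) := by
    rw [tendsto_iff_dist_tendsto_zero]
    exact squeeze_zero (fun n => dist_nonneg) hdist htoReal
  -- second limit: integrals of D n tend to f b - f a
  set F : ℝ → ℝ := fun y => ∫ t in a..y, f t with hF
  have hFint : ∀ c d : ℝ, ∫ t in c..d, f t = F d - F c := by
    intro c d
    have h1 : (∫ t in a..c, f t) + ∫ t in c..d, f t = ∫ t in a..d, f t :=
      intervalIntegral.integral_add_adjacent_intervals
        (hf.intervalIntegrable a c) (hf.intervalIntegrable c d)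
    have h2 : F d = ∫ t in a..d, f t := rfl
    have h3 : F c = ∫ t in a..c, f t := rfl
    rw [h2, h3]
    linarith
  have hDval : ∀ n : ℕ, ∫ x in a..b, D n x
      = (F (b + ((n:ℝ) + 1)⁻¹) - F b) / ((n:ℝ) + 1)⁻¹
        - (F (a + ((n:ℝ) + 1)⁻¹) - F a) / ((n:ℝ) + 1)⁻¹ := by
    intro n
    set h := ((n:ℝ) + 1)⁻¹ with hh
    have hDsub : ∫ x in a..b, D n x
        = ((∫ x in a..b, f (x + h)) - ∫ x in a..b, f x) / h := by
      have hi1 : IntervalIntegrable (fun x => f (x + h)) volume a b :=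
        Continuous.intervalIntegrable (by fun_prop) a b
      simp only [hD]
      rw [intervalIntegral.integral_div,
        intervalIntegral.integral_sub hi1 (hf.intervalIntegrable a b)]
    rw [hDsub, intervalIntegral.integral_comp_add_right f h]
    rw [hFint (a + h) (b + h), hFint a b]
    ring
  have hFder : ∀ y : ℝ, HasDerivAt F (f y) y := by
    intro y
    exact intervalIntegral.integral_hasDerivAt_right (hf.intervalIntegrable a y)
      hf.stronglyMeasurable.stronglyMeasurableAtFilter hf.continuousAt
  have hslope_b : Tendsto (fun n : ℕ => (F (b + ((n:ℝ) + 1)⁻¹) - F b) / ((n:ℝ) + 1)⁻¹)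
      atTop (nhds (f b)) := slope_tendsto_aux (hFder b)
  have hslope_a : Tendsto (fun n : ℕ => (F (a + ((n:ℝ) + 1)⁻¹) - F a) / ((n:ℝ) + 1)⁻¹)
      atTop (nhds (f a)) := slope_tendsto_aux (hFder a)
  have hInt_tend2 : Tendsto (fun n => ∫ x in a..b, D n x) atTop (nhds (f b - f a)) := by
    have := hslope_b.sub hslope_a
    refine this.congr fun n => (hDval n).symm
  have heq : ∀ n, ∫ x in a..b, D n x = ∫ x, D n x ∂μab := by
    intro n
    rw [intervalIntegral.integral_of_le hab.le]
  rw [show (∫ x in a..b, g x) = ∫ x, g x ∂μab from intervalIntegral.integral_of_le hab.le]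
  refine tendsto_nhds_unique hInt_tend2 ?_
  refine hInt_tend.congr' ?_
  exact Filter.Eventually.of_forall fun n => (heq n).symm

end riesz_aux

theorem forward_dir {p : ℝ} (hp : 1 < p) {f g : ℝ → ℝ}
    (hmem : MemLp g (ENNReal.ofReal p) (volume : Measure ℝ))
    (hftc : ∀ a b : ℝ, a ≤ b → f b - f a = ∫ u in a..b, g u) :
    ∃ C : ℝ, 0 < C ∧ ∀ (N : ℕ) (x : Fin (N + 1) → ℝ), StrictMono x →
      ∑ n : Fin N, |f (x n.succ) - f (x n.castSucc)| ^ p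
          / (x n.succ - x n.castSucc) ^ (p - 1) ≤ C := by
  have hp0 : (0:ℝ) < p := lt_trans zero_lt_one hp
  have hq0 : (0:ℝ) < p / (p - 1) := div_pos hp0 (by linarith)
  have hpq : p.HolderConjugate (p / (p - 1)) := by
    rw [Real.holderConjugate_iff]
    refine ⟨hp, ?_⟩
    rw [inv_div]; field_simp; ring
  set q := p / (p - 1) with hq
  set I : ℝ≥0∞ := ∫⁻ t, (‖g t‖₊ : ℝ≥0∞) ^ p ∂volume with hI
  have hIfin : I ≠ ⊤ := by
    have h2 := hmem.2
    rw [eLpNorm_eq_lintegral_rpow_enorm_toReal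
      (by simp [ENNReal.ofReal_eq_zero]; linarith) ENNReal.ofReal_ne_top] at h2
    rw [ENNReal.toReal_ofReal hp0.le] at h2
    have h3 : (I) ^ (1 / p) < ⊤ := h2
    by_contra hcon
    rw [hcon, ENNReal.top_rpow_of_pos (by positivity)] at h3
    exact (lt_irrefl _ h3).elim
  refine ⟨I.toReal + 1, by positivity, ?_⟩
  intro N x hx
  set A : Fin N → ℝ≥0∞ := fun n =>
    ∫⁻ t in Set.Ioc (x n.castSucc) (x n.succ), (‖g t‖₊ : ℝ≥0∞) ^ p ∂volume with hA
  have hAle : ∀ n, A n ≤ I := fun n => setLIntegral_le_lintegral _ _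
  have hAfin : ∀ n, A n ≠ ⊤ := fun n => ne_top_of_le_ne_top hIfin (hAle n)
  have hterm : ∀ n : Fin N,
      |f (x n.succ) - f (x n.castSucc)| ^ p / (x n.succ - x n.castSucc) ^ (p - 1)
        ≤ (A n).toReal := by
    intro n
    set u := x n.castSucc
    set v := x n.succ
    have huv : u < v := hx (Fin.castSucc_lt_succ : n.castSucc < n.succ)
    have hval : f v - f u = ∫ t in Set.Ioc u v, g t ∂volume := by
      rw [hftc u v huv.le, intervalIntegral.integral_of_le huv.le]
    have h1 : |f v - f u| ≤ (∫⁻ t in Set.Ioc u v, (‖g t‖₊ : ℝ≥0∞) ∂volume).toReal := by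
      rw [hval]
      have := norm_integral_le_lintegral_norm (μ := volume.restrict (Set.Ioc u v)) g
      rw [Real.norm_eq_abs] at this
      refine le_trans this ?_
      refine le_of_eq ?_
      congr 1
      refine lintegral_congr fun t => ?_
      rw [← enorm_eq_nnnorm, Real.enorm_eq_ofReal_abs, Real.norm_eq_abs]
    have h2 : ∫⁻ t in Set.Ioc u v, (‖g t‖₊ : ℝ≥0∞) ∂volume
        ≤ (A n) ^ (1/p) * (ENNReal.ofReal (v - u)) ^ (1/q) := by
      have holder := ENNReal.lintegral_mul_le_Lp_mul_Lq (volume.restrict (Set.Ioc u v)) hpq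
        (f := fun t => (‖g t‖₊ : ℝ≥0∞)) (g := fun _ => (1:ℝ≥0∞))
        (hmem.aestronglyMeasurable.restrict.aemeasurable.nnnorm.coe_nnreal_ennreal)
        aemeasurable_const
      simp only [Pi.mul_apply, mul_one, ENNReal.one_rpow] at holder
      refine le_trans holder ?_
      rw [lintegral_const, Measure.restrict_apply_univ, Real.volume_Ioc, one_mul]
    have hBfin : (A n) ^ (1/p) * (ENNReal.ofReal (v - u)) ^ (1/q) ≠ ⊤ :=
      ENNReal.mul_ne_top
        (ENNReal.rpow_ne_top_of_nonneg (by positivity) (hAfin n))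
        (ENNReal.rpow_ne_top_of_nonneg (by positivity) ENNReal.ofReal_ne_top)
    have h3 : |f v - f u| ≤ (A n).toReal ^ (1/p) * (v - u) ^ (1/q) := by
      refine le_trans h1 ?_
      have := ENNReal.toReal_mono hBfin h2
      refine le_trans this (le_of_eq ?_)
      rw [ENNReal.toReal_mul, ← ENNReal.toReal_rpow, ← ENNReal.toReal_rpow,
        ENNReal.toReal_ofReal (by linarith : (0:ℝ) ≤ v - u)]
    have h4 : |f v - f u| ^ p ≤ (A n).toReal * (v - u) ^ (p - 1) := by
      have h5 := Real.rpow_le_rpow (abs_nonneg _) h3 hp0.le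
      refine le_trans h5 (le_of_eq ?_)
      rw [Real.mul_rpow (Real.rpow_nonneg ENNReal.toReal_nonneg _)
        (Real.rpow_nonneg (by linarith) _)]
      rw [← Real.rpow_mul ENNReal.toReal_nonneg, ← Real.rpow_mul (by linarith)]
      rw [one_div_mul_cancel hp0.ne', Real.rpow_one]
      congr 2
      rw [hq]
      field_simp
    rw [div_le_iff₀ (Real.rpow_pos_of_pos (by linarith) _)]
    exact h4
  refine le_trans (Finset.sum_le_sum fun n _ => hterm n) ?_
  -- sum of A n ≤ I
  have hsum : ∑ n : Fin N, A n ≤ I := by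
    set ν : Measure ℝ := volume.withDensity (fun t => (‖g t‖₊ : ℝ≥0∞) ^ p) with hν
    have hAν : ∀ n : Fin N, A n = ν (Set.Ioc (x n.castSucc) (x n.succ)) := by
      intro n
      rw [hν, withDensity_apply _ measurableSet_Ioc]
    have hdisj : Pairwise (Function.onFun Disjoint
        (fun n : Fin N => Set.Ioc (x n.castSucc) (x n.succ))) := by
      intro m n hmn
      rcases lt_or_gt_of_ne hmn with h | h
      · refine Set.Ioc_disjoint_Ioc.mpr ?_
        have hle : x m.succ ≤ x n.castSucc := by
          refine hx.monotone ?_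
          rw [Fin.le_def]
          simp only [Fin.val_succ, Fin.coe_castSucc]
          exact h
        exact le_trans (min_le_left _ _) (le_trans hle (le_max_right _ _))
      · refine Set.Ioc_disjoint_Ioc.mpr ?_
        have hle : x n.succ ≤ x m.castSucc := by
          refine hx.monotone ?_
          rw [Fin.le_def]
          simp only [Fin.val_succ, Fin.coe_castSucc]
          exact h
        exact le_trans (min_le_right _ _) (le_trans hle (le_max_left _ _))
    calc ∑ n : Fin N, A n = ∑ n : Fin N, ν (Set.Ioc (x n.castSucc) (x n.succ)) := by
          exact Finset.sum_congr rfl fun n _ => hAν n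
      _ = ν (⋃ n : Fin N, Set.Ioc (x n.castSucc) (x n.succ)) := by
          rw [measure_iUnion hdisj (fun n => measurableSet_Ioc), tsum_fintype]
      _ ≤ ν Set.univ := measure_mono (Set.subset_univ _)
      _ = I := by rw [hν, withDensity_apply _ MeasurableSet.univ, Measure.restrict_univ]
  have := ENNReal.toReal_mono hIfin hsum
  rw [ENNReal.toReal_sum (fun n _ => hAfin n)] at this
  linarith

/-- A function `f : ℝ → ℝ` is of the form `f(b) - f(a) = ∫_a^b g(u) du` with
`g ∈ Lᵖ(ℝ)`, `1 < p < ∞`, iff the sums `∑ |f(xₙ₊₁) - f(xₙ)|ᵖ/(xₙ₊₁ - xₙ)^(p-1)` over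
finite increasing sequences of points are uniformly bounded. -/
theorem stmt7 (p : ℝ) (hp : 1 < p) (f : ℝ → ℝ) :
    (∃ g : ℝ → ℝ, MemLp g (ENNReal.ofReal p) (volume : Measure ℝ) ∧
        ∀ a b : ℝ, a ≤ b → f b - f a = ∫ u in a..b, g u) ↔
      (∃ C : ℝ, 0 < C ∧ ∀ (N : ℕ) (x : Fin (N + 1) → ℝ), StrictMono x →
        ∑ n : Fin N, |f (x n.succ) - f (x n.castSucc)| ^ p
            / (x n.succ - x n.castSucc) ^ (p - 1) ≤ C) := by
  constructor
  · rintro ⟨g, hmem, hftc⟩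
    exact forward_dir hp hmem hftc
  · rintro ⟨C, hC, hsum⟩
    have hsum1 := sum_range_le hp hC hsum
    have hold_strict := holder_strict hp hsum1
    have hf : Continuous f := f_cont hp (fun a b hab => f_holder hp hold_strict a b hab)
    have hold_mono := holder_mono hp (le_trans (by positivity) (hsum1 0 (fun _ => 0) (by omega)))
      hf hold_strict
    have hbv : LocallyBoundedVariationOn f Set.univ :=
      f_bv hp hC.le hold_mono
    have havg : ∀ {h : ℝ}, 0 < h → ∀ (a : ℝ) (K : ℕ),
        ∫ x in a..(a + K * h), |f (x + h) - f x| ^ p ≤ C * h ^ p :=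
      fun {h} hh a K => avg_bound hp hC hf hsum1 hh a K
    have hquot : ∀ {h : ℝ}, 0 < h → ∀ a b : ℝ,
        ∫⁻ x in Set.Ioc a b, ENNReal.ofReal (|(f (x + h) - f x) / h| ^ p)
          ≤ ENNReal.ofReal C :=
      fun {h} hh a b => quot_lintegral hp hC hf havg hh a b
    have hloc : ∀ a b : ℝ,
        ∫⁻ x in Set.Ioc a b, ENNReal.ofReal (|deriv f x| ^ p) ≤ ENNReal.ofReal C :=
      fun a b => deriv_lintegral hp hC hf hbv hquot a b
    have hmem : MemLp (deriv f) (ENNReal.ofReal p) (volume : Measure ℝ) :=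
      g_memLp hp (measurable_deriv f) (glob_lintegral hp (measurable_deriv f) hloc)
    refine ⟨deriv f, hmem, fun a b hab => ?_⟩
    exact ftc_aux hp hf (D_tendsto hbv) (fun a b => unif_int hp hC hf hquot a b) hmem hab
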